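/- Let R be a commutative ring, I = (t_1,...,t_n) an ideal generated by a quasi-regular sequence such that R and R/I are projective k-modules and the Koszul complex K of t_1,...,t_n over R is exact in nonzero degrees. Then for any k-linear section σ: R/I → R of the quotient map, there is a degree −1 k-linear operator h on K such that: π∘σ = 1 on R/I, σ∘π = 1_K − [d_K, h], h² = 0, h∘σ = 0, and π∘h = 0, where π: K → R/I is the canonical augmentation. In other words (σ, π, h) is a strong deformation retract of (K, d_K) onto (R/I, 0). -/

import Mathlib

noncomputable section
namespace Stmt10

/-- Quasi-regularity of a sequence (elementary formulation, cf. Stacks 10.69). -/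
def IsQuasiRegular {R : Type*} [CommRing R] {n : ℕ} (t : Fin n → R) : Prop :=
  ∀ (m : ℕ) (s : Finset (Fin n → ℕ)) (a : (Fin n → ℕ) → R),
    (∀ M ∈ s, ∑ i, M i = m) →
    (∑ M ∈ s, a M * ∏ i, t i ^ M i) ∈ (Ideal.span (Set.range t)) ^ (m + 1) →
    ∀ M ∈ s, a M ∈ Ideal.span (Set.range t)

def ksign {n : ℕ} (i : Fin n) (S : Finset (Fin n)) : ℤ :=
  (-1) ^ (S.filter (fun j => j < i)).card

variable (k : Type*) {R : Type*} [CommRing k] [CommRing R] [Algebra k R]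
  {n : ℕ} (t : Fin n → R)

/- The Koszul complex `K = ⋀(⊕_i R θ_i)` of `t_1, …, t_n` over `R` is modelled as the free
`R`-module on subsets `S ⊆ {1,…,n}` (`θ_S = θ_{i_1} ∧ ⋯ ∧ θ_{i_p}`), graded by `|S|`, with
differential `d_K = ∑_i t_i θ_i^*`. -/

/-- The Koszul differential `d_K = ∑_i t_i θ_i^*`, as a `k`-linear operator. -/
def dK : (Finset (Fin n) → R) →ₗ[k] (Finset (Fin n) → R) where
  toFun f S := ∑ i : Fin n, if i ∈ S then 0 else ksign i S • (t i * f (insert i S))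
  map_add' f g := by
    funext S
    simp only [Pi.add_apply]
    rw [← Finset.sum_add_distrib]
    refine Finset.sum_congr rfl fun i _ => ?_
    split <;> simp [mul_add, smul_add]
  map_smul' a f := by
    funext S
    simp only [Pi.smul_apply, RingHom.id_apply]
    rw [Finset.smul_sum]
    refine Finset.sum_congr rfl fun i _ => ?_
    split <;> simp [mul_smul_comm, smul_comm]

/-- The augmentation `π : K → R/I`, projecting to the degree-0 part and reducing mod `I`. -/
def aug : (Finset (Fin n) → R) →ₗ[k] R ⧸ Ideal.span (Set.range t) :=
  (Ideal.Quotient.mkₐ k (Ideal.span (Set.range t))).toLinearMap ∘ₗ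
    (LinearMap.proj (R := k) (φ := fun _ : Finset (Fin n) => R) ∅)

/-- The inclusion `σ : R/I → K` induced by a `k`-linear section of `R → R/I`, landing in
degree 0. -/
def incl (σ : (R ⧸ Ideal.span (Set.range t)) →ₗ[k] R) :
    (R ⧸ Ideal.span (Set.range t)) →ₗ[k] (Finset (Fin n) → R) :=
  (LinearMap.single k (fun _ : Finset (Fin n) => R) ∅) ∘ₗ σ

def proj (p : ℕ) : (Finset (Fin n) → R) →ₗ[k] (Finset (Fin n) → R) where
  toFun f S := if S.card = p then f S else 0
  map_add' f g := by funext S; by_cases h : S.card = p <;> simp [h]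
  map_smul' a f := by funext S; by_cases h : S.card = p <;> simp [h]

@[simp] lemma proj_apply (p : ℕ) (f : Finset (Fin n) → R) (S : Finset (Fin n)) :
    proj k p f S = if S.card = p then f S else 0 := rfl

lemma dK_apply (f : Finset (Fin n) → R) (S : Finset (Fin n)) :
    dK k t f S = ∑ i : Fin n, if i ∈ S then 0 else ksign i S • (t i * f (insert i S)) := rfl

lemma proj_proj (p q : ℕ) (f : Finset (Fin n) → R) :
    proj k p (proj k q f) = if p = q then proj k p f else 0 := by
  funext S
  by_cases h : S.card = p <;> by_cases h' : p = q <;> simp [h, h', Pi.zero_apply] <;> aesop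

lemma proj_eq_self {q : ℕ} {f : Finset (Fin n) → R} (hf : ∀ S, S.card ≠ q → f S = 0) :
    proj k q f = f := by
  funext S
  by_cases h : S.card = q <;> simp [h]
  exact (hf S h).symm

lemma proj_eq_zero {p q : ℕ} (h : p ≠ q) {f : Finset (Fin n) → R}
    (hf : ∀ S, S.card ≠ q → f S = 0) : proj k p f = 0 := by
  funext S
  by_cases hc : S.card = p <;> simp [hc]
  exact hf S (by omega)

lemma dK_proj_succ (p : ℕ) (f : Finset (Fin n) → R) :
    dK k t (proj k (p+1) f) = proj k p (dK k t f) := by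
  funext S
  rw [dK_apply k t (proj k (p+1) f) S, proj_apply k p (dK k t f) S,
    dK_apply k t f S]
  simp only [proj_apply]
  by_cases h : S.card = p
  · rw [if_pos h]
    refine Finset.sum_congr rfl fun i _ => ?_
    by_cases hi : i ∈ S <;> simp [hi, Finset.card_insert_of_notMem, h]
  · rw [if_neg h]
    refine Finset.sum_eq_zero fun i _ => ?_
    by_cases hi : i ∈ S
    · simp [hi]
    · simp [hi, Finset.card_insert_of_notMem, h]

lemma ksign_insert_of_lt {i j : Fin n} (hij : i < j) {S : Finset (Fin n)} (hi : i ∉ S) :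
    ksign j (insert i S) = -ksign j S := by
  unfold ksign
  rw [Finset.filter_insert, if_pos hij,
    Finset.card_insert_of_notMem (by simp [hi]), pow_succ]
  ring

lemma ksign_insert_of_not_lt {i j : Fin n} (hij : ¬ i < j) (S : Finset (Fin n)) :
    ksign j (insert i S) = ksign j S := by
  unfold ksign
  rw [Finset.filter_insert, if_neg hij]

lemma ksign_antisymm {i j : Fin n} (hij : i ≠ j) {S : Finset (Fin n)}
    (hi : i ∉ S) (hj : j ∉ S) :
    ksign i S * ksign j (insert i S) + ksign j S * ksign i (insert j S) = 0 := by
  rcases lt_or_gt_of_ne hij with h | h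
  · rw [ksign_insert_of_lt h hi, ksign_insert_of_not_lt (not_lt.mpr h.le)]
    ring
  · rw [ksign_insert_of_lt h hj, ksign_insert_of_not_lt (not_lt.mpr h.le)]
    ring

lemma dK_dK (f : Finset (Fin n) → R) : dK k t (dK k t f) = 0 := by
  funext S
  rw [dK_apply k t (dK k t f) S, Pi.zero_apply]
  have step : ∀ i : Fin n,
      (if i ∈ S then 0 else ksign i S • (t i * dK k t f (insert i S)))
      = ∑ j : Fin n, (if i ∈ S then (0:R) else if j ∈ insert i S then 0 else
          (ksign i S * ksign j (insert i S)) • (t i * (t j * f (insert j (insert i S))))) := by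
    intro i
    by_cases hi : i ∈ S
    · simp [hi]
    · simp only [if_neg hi]
      rw [dK_apply k t f (insert i S), Finset.mul_sum, Finset.smul_sum]
      refine Finset.sum_congr rfl fun j _ => ?_
      by_cases hj : j ∈ insert i S
      · simp [hj]
      · rw [if_neg hj, if_neg hj, mul_smul_comm, smul_smul]
  rw [Finset.sum_congr rfl fun i _ => step i, ← Finset.sum_product']
  refine Finset.sum_ninvolution (fun p => (p.2, p.1)) ?_ ?_ (fun _ => by simp)
    (fun _ => rfl)
  · rintro ⟨i, j⟩
    simp only
    by_cases hi : i ∈ S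
    · simp [hi, Finset.mem_insert]
    · by_cases hj : j ∈ S
      · simp [hj, Finset.mem_insert]
      · by_cases hij : i = j
        · subst hij
          simp [Finset.mem_insert]
        · rw [if_neg hi, if_neg hj,
            if_neg (by simp only [Finset.mem_insert, not_or]; exact ⟨fun h => hij h.symm, hj⟩ :
              ¬ j ∈ insert i S),
            if_neg (by simp only [Finset.mem_insert, not_or]; exact ⟨hij, hi⟩ :
              ¬ i ∈ insert j S),
            Finset.insert_comm i j S, mul_left_comm (t j) (t i), ← add_smul,
            ksign_antisymm hij hi hj, zero_smul]
  · rintro ⟨i, j⟩ hF hc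
    apply hF
    have hij : j = i := congrArg Prod.fst hc
    subst hij
    simp [Finset.mem_insert]

lemma dK_supp {q : ℕ} {f : Finset (Fin n) → R} (hf : ∀ S, S.card ≠ q → f S = 0) :
    ∀ S : Finset (Fin n), S.card + 1 ≠ q → dK k t f S = 0 := by
  intro S hS
  rw [dK_apply]
  refine Finset.sum_eq_zero fun i _ => ?_
  by_cases hi : i ∈ S
  · rw [if_pos hi]
  · rw [if_neg hi, hf _ (by rw [Finset.card_insert_of_notMem hi]; exact hS), mul_zero,
      smul_zero]

lemma aug_apply (f : Finset (Fin n) → R) :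
    aug k t f = Ideal.Quotient.mk (Ideal.span (Set.range t)) (f ∅) := rfl

lemma incl_apply (σ : (R ⧸ Ideal.span (Set.range t)) →ₗ[k] R)
    (x : R ⧸ Ideal.span (Set.range t)) (S : Finset (Fin n)) :
    incl k t σ x S = if S = ∅ then σ x else 0 := by
  show Pi.single (M := fun _ : Finset (Fin n) => R) ∅ (σ x) S = _
  rw [Pi.single_apply]

lemma aug_dK (f : Finset (Fin n) → R) : aug k t (dK k t f) = 0 := by
  rw [aug_apply, Ideal.Quotient.eq_zero_iff_mem, dK_apply]
  refine Ideal.sum_mem _ fun i _ => ?_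
  by_cases hi : i ∈ (∅ : Finset (Fin n))
  · rw [if_pos hi]; exact Ideal.zero_mem _
  · rw [if_neg hi]
    exact Submodule.smul_of_tower_mem _ _
      (Ideal.mul_mem_right _ _ (Ideal.subset_span ⟨i, rfl⟩))

lemma dK_incl (σ : (R ⧸ Ideal.span (Set.range t)) →ₗ[k] R)
    (x : R ⧸ Ideal.span (Set.range t)) : dK k t (incl k t σ x) = 0 := by
  funext S
  rw [dK_apply, Pi.zero_apply]
  refine Finset.sum_eq_zero fun i _ => ?_
  by_cases hi : i ∈ S
  · rw [if_pos hi]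
  · rw [if_neg hi, incl_apply, if_neg (Finset.insert_ne_empty i S), mul_zero, smul_zero]

lemma aug_incl (σ : (R ⧸ Ideal.span (Set.range t)) →ₗ[k] R)
    (hσ : ∀ x, Ideal.Quotient.mk (Ideal.span (Set.range t)) (σ x) = x)
    (x : R ⧸ Ideal.span (Set.range t)) : aug k t (incl k t σ x) = x := by
  rw [aug_apply, incl_apply, if_pos rfl, hσ]

lemma aug_proj_zero (f : Finset (Fin n) → R) : aug k t (proj k 0 f) = aug k t f := by
  rw [aug_apply, aug_apply, proj_apply, if_pos (Finset.card_empty)]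

lemma aug_proj_succ (p : ℕ) (f : Finset (Fin n) → R) : aug k t (proj k (p+1) f) = 0 := by
  rw [aug_apply, proj_apply, if_neg (by simp), map_zero]

lemma incl_supp (σ : (R ⧸ Ideal.span (Set.range t)) →ₗ[k] R)
    (x : R ⧸ Ideal.span (Set.range t)) :
    ∀ S : Finset (Fin n), S.card ≠ 0 → incl k t σ x S = 0 := by
  intro S hS
  rw [incl_apply, if_neg (by rintro rfl; simp at hS)]

lemma proj_zero_of {m q : ℕ} {g : Finset (Fin n) → R} (hg : ∀ S, m < S.card → g S = 0)
    (h : m < q) : proj k q g = 0 := by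
  funext S
  rw [proj_apply, Pi.zero_apply]
  by_cases hc : S.card = q
  · rw [if_pos hc]; exact hg S (by omega)
  · rw [if_neg hc]

lemma dK_supp' {m : ℕ} {g : Finset (Fin n) → R} (hg : ∀ S, m < S.card → g S = 0) :
    ∀ S : Finset (Fin n), m ≤ S.card → dK k t g S = 0 := by
  intro S hS
  rw [dK_apply]
  refine Finset.sum_eq_zero fun i _ => ?_
  by_cases hi : i ∈ S
  · rw [if_pos hi]
  · rw [if_neg hi, hg _ (by rw [Finset.card_insert_of_notMem hi]; omega), mul_zero, smul_zero]

lemma lift_step (hproj : Module.Projective k (Finset (Fin n) → R)) (p : ℕ)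
    (w : (Finset (Fin n) → R) →ₗ[k] (Finset (Fin n) → R))
    (hw : ∀ f, ∃ g, dK k t (proj k (p+1) g) = w f) :
    ∃ ℓ : (Finset (Fin n) → R) →ₗ[k] (Finset (Fin n) → R),
      ∀ f, dK k t (proj k (p+1) (ℓ f)) = w f := by
  haveI := hproj
  set D := dK k t ∘ₗ proj k (p+1) with hD
  have hmem : ∀ f, w f ∈ LinearMap.range D := fun f => by
    obtain ⟨g, hg⟩ := hw f
    exact ⟨g, hg⟩
  obtain ⟨ℓ, hℓ⟩ := Module.projective_lifting_property D.rangeRestrict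
      (w.codRestrict (LinearMap.range D) hmem) (LinearMap.surjective_rangeRestrict D)
  refine ⟨ℓ, fun f => ?_⟩
  have := LinearMap.congr_fun hℓ f
  have h2 := congrArg Subtype.val this
  simpa [D] using h2

lemma exists_homotopy
    (hRproj : Module.Projective k R)
    (hexact : ∀ (p : ℕ) (f : Finset (Fin n) → R), dK k t f = 0 →
        (∀ S, S.card ≠ p + 1 → f S = 0) → ∃ g, dK k t g = f)
    (σ : (R ⧸ Ideal.span (Set.range t)) →ₗ[k] R)
    (hσ : ∀ x, Ideal.Quotient.mk (Ideal.span (Set.range t)) (σ x) = x) :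
    ∃ H : (Finset (Fin n) → R) →ₗ[k] (Finset (Fin n) → R),
      (∀ (q : ℕ) (f : Finset (Fin n) → R), (∀ S, S.card ≠ q → f S = 0) →
        ∀ S, S.card ≠ q + 1 → H f S = 0) ∧
      (∀ f : Finset (Fin n) → R,
        dK k t (H f) + H (dK k t f) = f - incl k t σ (aug k t f)) := by
  haveI := hRproj
  haveI hDF : Module.Projective k (DFinsupp (fun _ : Finset (Fin n) => R)) := inferInstance
  haveI hDS : Module.Projective k (DirectSum (Finset (Fin n)) (fun _ => R)) := hDF
  have hproj : Module.Projective k (Finset (Fin n) → R) :=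
    Module.Projective.of_equiv
      (DirectSum.linearEquivFunOnFintype k (Finset (Fin n)) (fun _ => R))
  have key : ∀ p : ℕ, ∃ H : (Finset (Fin n) → R) →ₗ[k] (Finset (Fin n) → R),
      (∀ (q : ℕ) (f : Finset (Fin n) → R), (∀ S, S.card ≠ q → f S = 0) →
        ∀ S, S.card ≠ q + 1 → H f S = 0) ∧
      (∀ (q : ℕ) (f : Finset (Fin n) → R), p < q → H (proj k q f) = 0) ∧
      (∀ f : Finset (Fin n) → R, (∀ S, p < S.card → f S = 0) →
        dK k t (H f) + H (dK k t f) = f - incl k t σ (aug k t f)) := by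
    intro p
    induction p with
    | zero =>
      have hwmem : ∀ f, ∃ g, dK k t (proj k 1 g) =
          ((LinearMap.id - (incl k t σ) ∘ₗ (aug k t)) ∘ₗ proj k 0) f := by
        intro f
        have hy : f ∅ - σ (Ideal.Quotient.mk (Ideal.span (Set.range t)) (f ∅))
            ∈ Ideal.span (Set.range t) := by
          rw [← Ideal.Quotient.eq_zero_iff_mem, map_sub, hσ, sub_self]
        obtain ⟨c, hc⟩ := Ideal.mem_span_range_iff_exists_fun.mp hy
        refine ⟨fun S => ∑ i : Fin n, if S = {i} then c i else 0, ?_⟩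
        funext S
        simp only [LinearMap.comp_apply, LinearMap.sub_apply, LinearMap.id_apply,
          Pi.sub_apply]
        by_cases hS : S = ∅
        · subst hS
          rw [dK_apply]
          have hterm : ∀ i : Fin n,
              (if i ∈ (∅ : Finset (Fin n)) then (0:R) else
                ksign i ∅ • (t i *
                  proj k 1 (fun S => ∑ j : Fin n, if S = {j} then c j else 0) (insert i ∅)))
              = c i * t i := by
            intro i
            rw [if_neg (Finset.notMem_empty i)]
            have h1 : ksign i (∅ : Finset (Fin n)) = 1 := by simp [ksign]
            rw [h1, one_smul, proj_apply, if_pos (by simp)]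
            rw [LawfulSingleton.insert_empty_eq]
            rw [Finset.sum_eq_single i
              (fun j _ hj => if_neg (fun h => hj (Finset.singleton_injective h.symm)))
              (fun h => absurd (Finset.mem_univ i) h)]
            rw [if_pos rfl, mul_comm]
          rw [Finset.sum_congr rfl fun i _ => hterm i, hc]
          rw [proj_apply, if_pos (Finset.card_empty), aug_proj_zero, aug_apply,
            incl_apply, if_pos rfl]
        · have hcard : S.card ≠ 0 := fun h => hS (Finset.card_eq_zero.mp h)
          rw [dK_apply]
          rw [Finset.sum_eq_zero fun i _ => ?_, proj_apply, if_neg hcard,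
            incl_apply, if_neg hS, sub_zero]
          by_cases hi : i ∈ S
          · rw [if_pos hi]
          · rw [if_neg hi, proj_apply,
              if_neg (by rw [Finset.card_insert_of_notMem hi]; omega), mul_zero, smul_zero]
      obtain ⟨ℓ, hℓ⟩ := lift_step k t hproj 0 _ hwmem
      refine ⟨proj k 1 ∘ₗ ℓ ∘ₗ proj k 0, ?_, ?_, ?_⟩
      · intro q f hf S hS
        simp only [LinearMap.comp_apply]
        by_cases hq : q = 0
        · subst hq
          rw [proj_apply, if_neg (by omega)]
        · rw [proj_eq_zero k (Ne.symm hq) hf, map_zero, map_zero, Pi.zero_apply]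
      · intro q f hq
        simp only [LinearMap.comp_apply]
        rw [proj_proj, if_neg (by omega), map_zero, map_zero]
      · intro f hf
        have hdf : dK k t f = 0 := funext fun S => dK_supp' k t hf S (Nat.zero_le _)
        have hf' : ∀ S, S.card ≠ 0 → f S = 0 := fun S hS => hf S (by omega)
        simp only [LinearMap.comp_apply]
        rw [hdf, map_zero, map_zero, map_zero, add_zero, hℓ]
        simp only [LinearMap.comp_apply, LinearMap.sub_apply, LinearMap.id_apply]
        rw [proj_proj, if_pos rfl, proj_eq_self k hf', aug_apply]
    | succ p ih =>
      obtain ⟨H, hH1, hH2, hH3⟩ := ih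
      set w : (Finset (Fin n) → R) →ₗ[k] (Finset (Fin n) → R) :=
        (LinearMap.id - H ∘ₗ dK k t) ∘ₗ proj k (p+1) with hwdef
      have hw_apply : ∀ f, w f = proj k (p+1) f - H (dK k t (proj k (p+1) f)) := by
        intro f
        rw [hwdef]
        simp only [LinearMap.comp_apply, LinearMap.sub_apply, LinearMap.id_apply]
      have hu_supp : ∀ (f : Finset (Fin n) → R) (S : Finset (Fin n)), S.card ≠ p+1 →
          proj k (p+1) f S = 0 := by
        intro f S hS; rw [proj_apply, if_neg hS]
      have hdu_supp : ∀ (f : Finset (Fin n) → R) (S : Finset (Fin n)), S.card ≠ p →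
          dK k t (proj k (p+1) f) S = 0 :=
        fun f S hS => dK_supp k t (hu_supp f) S (by omega)
      have hw_supp : ∀ (f : Finset (Fin n) → R) (S : Finset (Fin n)), S.card ≠ p+1 →
          w f S = 0 := by
        intro f S hS
        rw [hw_apply, Pi.sub_apply, hu_supp f S hS,
          hH1 p _ (hdu_supp f) S hS, sub_zero]
      have hw_cycle : ∀ f, dK k t (w f) = 0 := by
        intro f
        have h3 := hH3 (dK k t (proj k (p+1) f)) (fun S hS => hdu_supp f S (by omega))
        rw [dK_dK, map_zero, add_zero, aug_dK, map_zero, sub_zero] at h3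
        rw [hw_apply, map_sub, h3, sub_self]
      have hwmem : ∀ f, ∃ g, dK k t (proj k (p+1+1) g) = w f := by
        intro f
        obtain ⟨g, hg⟩ := hexact p (w f) (hw_cycle f) (hw_supp f)
        exact ⟨g, by rw [dK_proj_succ, hg, proj_eq_self k (hw_supp f)]⟩
      obtain ⟨ℓ, hℓ⟩ := lift_step k t hproj (p+1) w hwmem
      refine ⟨H + proj k (p+1+1) ∘ₗ ℓ ∘ₗ proj k (p+1), ?_, ?_, ?_⟩
      · intro q f hf S hS
        simp only [LinearMap.add_apply, LinearMap.comp_apply, Pi.add_apply]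
        rw [hH1 q f hf S hS]
        by_cases hq : q = p+1
        · subst hq
          rw [proj_apply, if_neg (by omega), add_zero]
        · rw [proj_eq_zero k (fun h => hq h.symm) hf, map_zero, map_zero, Pi.zero_apply,
            add_zero]
      · intro q f hq
        simp only [LinearMap.add_apply, LinearMap.comp_apply]
        rw [hH2 q f (by omega), proj_proj, if_neg (by omega), map_zero, map_zero, add_zero]
      · intro f hf
        set u : Finset (Fin n) → R := proj k (p+1) f with hu
        set g : Finset (Fin n) → R := f - u with hgdef
        have hg_supp : ∀ S, p < S.card → g S = 0 := by
          intro S hS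
          rw [hgdef, Pi.sub_apply, hu, proj_apply]
          by_cases hc : S.card = p+1
          · rw [if_pos hc, sub_self]
          · rw [if_neg hc, hf S (by omega), sub_zero]
        have hfgu : f = g + u := by rw [hgdef]; abel
        have hHu : H u = 0 := hH2 (p+1) f (by omega)
        have hprojdg : proj k (p+1) (dK k t g) = 0 := by
          funext S
          rw [proj_apply, Pi.zero_apply]
          by_cases hc : S.card = p+1
          · rw [if_pos hc, dK_supp' k t hg_supp S (by omega)]
          · rw [if_neg hc]
        have hprojdu : proj k (p+1) (dK k t u) = 0 := by
          rw [← dK_proj_succ, hu, proj_proj, if_neg (by omega), map_zero]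
        have hb : proj k (p+1) (dK k t f) = 0 := by
          have hsplit : dK k t f = dK k t g + dK k t u := by rw [← map_add, ← hfgu]
          rw [hsplit, map_add, hprojdg, hprojdu, add_zero]
        have hwproj : w (proj k (p+1) f) = w f := by
          rw [hwdef]
          simp only [LinearMap.comp_apply]
          rw [proj_proj, if_pos rfl]
        simp only [LinearMap.add_apply, LinearMap.comp_apply]
        rw [hb, map_zero, map_zero, map_add]
        rw [hℓ (proj k (p+1) f), hwproj, hw_apply f, ← hu]
        have hHf : H f = H g := by
          conv_lhs => rw [hfgu]
          rw [map_add, hHu, add_zero]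
        have hHdf : H (dK k t f) = H (dK k t g) + H (dK k t u) := by
          conv_lhs => rw [hfgu]
          rw [map_add, map_add]
        rw [hHf, hHdf]
        have haugf : aug k t f = aug k t g := by
          conv_lhs => rw [hfgu]
          rw [map_add, hu, aug_proj_succ, add_zero]
        have he := hH3 g hg_supp
        have hre : dK k t (H g) + (u - H (dK k t u)) + (H (dK k t g) + H (dK k t u) + 0)
            = (dK k t (H g) + H (dK k t g)) + u := by abel
        rw [hre, he]
        conv_rhs => rw [haugf, hfgu]
        abel
  obtain ⟨H, h1, _, h3⟩ := key n
  refine ⟨H, h1, fun f => h3 f fun S hS => absurd hS (by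
    have := Finset.card_le_univ S
    simp only [Finset.card_univ, Fintype.card_fin] at this
    omega)⟩

/-- Let `I = (t_1,…,t_n)` be generated by a quasi-regular sequence, with `R`
and `R/I` projective `k`-modules and the Koszul complex `K` of `t_1,…,t_n` exact in nonzero
degrees.  Then for any `k`-linear section `σ : R/I → R` of the quotient map there is a
degree `−1` (homological degree; raising the exterior degree by one) `k`-linear operator `h`
on `K` such that `π ∘ σ = 1`, `σ ∘ π = 1_K − [d_K, h]`, `h² = 0`, `h ∘ σ = 0` and
`π ∘ h = 0`: a strong deformation retract of `(K, d_K)` onto `(R/I, 0)`. -/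
theorem koszul_strong_deformation_retract
    (hqr : IsQuasiRegular t)
    (hRproj : Module.Projective k R)
    (hRIproj : Module.Projective k (R ⧸ Ideal.span (Set.range t)))
    (hexact : ∀ (p : ℕ) (f : Finset (Fin n) → R), dK k t f = 0 →
        (∀ S, S.card ≠ p + 1 → f S = 0) → ∃ g, dK k t g = f)
    (σ : (R ⧸ Ideal.span (Set.range t)) →ₗ[k] R)
    (hσ : ∀ x, Ideal.Quotient.mk (Ideal.span (Set.range t)) (σ x) = x) :
    ∃ h : (Finset (Fin n) → R) →ₗ[k] (Finset (Fin n) → R),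
      -- `h` has degree `−1` (it raises the exterior degree by one)
      (∀ (p : ℕ) (f : Finset (Fin n) → R), (∀ S, S.card ≠ p → f S = 0) →
          ∀ S, S.card ≠ p + 1 → h f S = 0)
      ∧ aug k t ∘ₗ incl k t σ = LinearMap.id
      ∧ incl k t σ ∘ₗ aug k t = LinearMap.id - (dK k t ∘ₗ h + h ∘ₗ dK k t)
      ∧ h ∘ₗ h = 0
      ∧ h ∘ₗ incl k t σ = 0
      ∧ aug k t ∘ₗ h = 0 := by
  obtain ⟨H0, hH0supp, hH0⟩ := exists_homotopy k t hRproj hexact σ hσ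
  have hπι : ∀ x, aug k t (incl k t σ x) = x := aug_incl k t σ hσ
  set E : (Finset (Fin n) → R) →ₗ[k] (Finset (Fin n) → R) :=
    LinearMap.id - incl k t σ ∘ₗ aug k t with hEdef
  have hE_apply : ∀ f, E f = f - incl k t σ (aug k t f) := by
    intro f
    rw [hEdef]
    simp only [LinearMap.sub_apply, LinearMap.comp_apply, LinearMap.id_apply]
  have hdE : ∀ f, dK k t (E f) = dK k t f := by
    intro f
    rw [hE_apply, map_sub, dK_incl, sub_zero]
  have hEd : ∀ f, E (dK k t f) = dK k t f := by
    intro f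
    rw [hE_apply, aug_dK, map_zero, sub_zero]
  have haugE : ∀ f, aug k t (E f) = 0 := by
    intro f
    rw [hE_apply, map_sub, hπι, sub_self]
  have hEE : ∀ f, E (E f) = E f := by
    intro f
    rw [hE_apply (E f), haugE, map_zero, sub_zero]
  have hEι : ∀ x, E (incl k t σ x) = 0 := by
    intro x
    rw [hE_apply, hπι, sub_self]
  have hF5 : ∀ f, aug k t (H0 (dK k t f)) = 0 := by
    intro f
    have h4 := congrArg (aug k t) (hH0 f)
    rw [map_add, map_sub, aug_dK, hπι, sub_self, zero_add] at h4
    exact h4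
  set h1 : (Finset (Fin n) → R) →ₗ[k] (Finset (Fin n) → R) := E ∘ₗ H0 ∘ₗ E with h1def
  have h1_apply : ∀ f, h1 f = E (H0 (E f)) := by
    intro f
    rw [h1def]
    simp only [LinearMap.comp_apply]
  have G1 : ∀ f, dK k t (h1 f) + h1 (dK k t f) = E f := by
    intro f
    have hA := hH0 (E f)
    rw [haugE, map_zero, sub_zero, hdE] at hA
    -- hA : dK (H0 (E f)) + H0 (dK f) = E f
    rw [h1_apply, hdE, h1_apply, hEd]
    have hB : E (H0 (dK k t f)) = H0 (dK k t f) := by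
      rw [hE_apply, hF5, map_zero, sub_zero]
    rw [hB]
    exact hA
  have G2 : ∀ x, h1 (incl k t σ x) = 0 := by
    intro x
    rw [h1_apply, hEι, map_zero, map_zero]
  have G3 : ∀ f, aug k t (h1 f) = 0 := by
    intro f
    rw [h1_apply]
    exact haugE _
  have G4 : ∀ f, E (h1 f) = h1 f := by
    intro f
    rw [h1_apply]
    exact hEE _
  have G5 : ∀ f, h1 (E f) = h1 f := by
    intro f
    rw [h1_apply, hEE, ← h1_apply]
  have G6 : ∀ f, dK k t (h1 (dK k t f)) = dK k t f := by
    intro f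
    have := G1 (dK k t f)
    rw [dK_dK, map_zero, add_zero, hEd] at this
    exact this
  set h2 : (Finset (Fin n) → R) →ₗ[k] (Finset (Fin n) → R) := h1 ∘ₗ dK k t ∘ₗ h1 with h2def
  have h2_apply : ∀ f, h2 f = h1 (dK k t (h1 f)) := by
    intro f
    rw [h2def]
    simp only [LinearMap.comp_apply]
  have hdh2 : ∀ f, dK k t (h2 f) = dK k t (h1 f) := by
    intro f
    rw [h2_apply, G6]
  have T1 : ∀ f, dK k t (h2 f) + h2 (dK k t f) = E f := by
    intro f
    rw [hdh2 f, h2_apply (dK k t f), G6 f]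
    exact G1 f
  have T5 : ∀ f, h2 (dK k t (h2 f)) = h2 f := by
    intro f
    rw [hdh2 f, h2_apply (dK k t (h1 f)), G6 (h1 f), ← h2_apply]
  have T6 : ∀ f, E (h2 f) = h2 f := by
    intro f
    rw [h2_apply]
    exact G4 _
  have T4 : ∀ f, h2 (h2 f) = 0 := by
    intro f
    have e1 : h2 (h2 f) = h2 (E (h2 f)) := by rw [T6]
    have e2 : E (h2 f) = dK k t (h2 (h2 f)) + h2 (dK k t (h2 f)) := (T1 (h2 f)).symm
    have e3 : h2 (h2 f) = h2 (h2 f) + h2 (h2 f) := by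
      conv_lhs => rw [e1, e2]
      rw [map_add, T5 (h2 f), T5 f]
    exact (left_eq_add.mp e3)
  have hE_supp : ∀ (q : ℕ) (f : Finset (Fin n) → R), (∀ S, S.card ≠ q → f S = 0) →
      ∀ S, S.card ≠ q → E f S = 0 := by
    intro q f hf S hS
    rw [hE_apply, Pi.sub_apply, hf S hS]
    by_cases hq : q = 0
    · subst hq
      rw [incl_supp k t σ _ S hS, sub_zero]
    · rw [aug_apply, hf ∅ (by simpa using Ne.symm hq), map_zero, map_zero, Pi.zero_apply,
        sub_zero]
  have h1_supp : ∀ (q : ℕ) (f : Finset (Fin n) → R), (∀ S, S.card ≠ q → f S = 0) →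
      ∀ S, S.card ≠ q + 1 → h1 f S = 0 := by
    intro q f hf S hS
    rw [h1_apply]
    exact hE_supp (q+1) _ (hH0supp q _ (hE_supp q f hf)) S hS
  have h2_supp : ∀ (p : ℕ) (f : Finset (Fin n) → R), (∀ S, S.card ≠ p → f S = 0) →
      ∀ S, S.card ≠ p + 1 → h2 f S = 0 := by
    intro p f hf S hS
    rw [h2_apply]
    refine h1_supp p _ (fun S' hS' => ?_) S hS
    exact dK_supp k t (h1_supp p f hf) S' (by omega)
  refine ⟨h2, h2_supp, ?_, ?_, ?_, ?_, ?_⟩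
  · refine LinearMap.ext fun x => ?_
    simp only [LinearMap.comp_apply, LinearMap.id_apply]
    exact hπι x
  · refine LinearMap.ext fun f => ?_
    simp only [LinearMap.comp_apply, LinearMap.sub_apply, LinearMap.add_apply,
      LinearMap.id_apply]
    rw [T1 f, hE_apply, sub_sub_cancel]
  · refine LinearMap.ext fun f => ?_
    simp only [LinearMap.comp_apply, LinearMap.zero_apply]
    exact T4 f
  · refine LinearMap.ext fun x => ?_
    simp only [LinearMap.comp_apply, LinearMap.zero_apply]
    rw [h2_apply, G2, map_zero, map_zero]
  · refine LinearMap.ext fun f => ?_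
    simp only [LinearMap.comp_apply, LinearMap.zero_apply]
    rw [h2_apply]
    exact G3 _


end Stmt10
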